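/- arXiv:1507.04797 — 5 statements merged into one kernel-verified Lean document; each statement's English description precedes it below -/
import Mathlib

section
/- Let A : ℝ≥0 → ℝ be right-continuous and nondecreasing with jumps ΔA ≥ 0, and decompose A = A^c + ΣΔA into its continuous part and jump part. Then the function G defined by G_t = 1 − (1−a)·exp(−∫_0^t dA^c)·∏_{s≤t}(1+ΔA_s)^{−1} solves the measure differential equation dG = (1−G) dA with initial condition G_{0−} = a; moreover any solution of this equation is monotone toward 1 and never crosses 1. -/
open MeasureTheory Set Filter Topology
namespace DG
variable {Δ : ℝ → ℝ}

lemma summable_of_subset (hΔnn : ∀ s, 0 ≤ Δ s) {t : ℝ}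
    (hsum : Summable fun s : Icc (0:ℝ) t => Δ s)
    {g : ℝ → ℝ} (hg0 : ∀ x, 0 ≤ g x) (hgΔ : ∀ x, g x ≤ Δ x)
    {s : Set ℝ} (hs : s ⊆ Icc 0 t) :
    Summable fun x : s => g x := by
  have h1 : Summable ((Icc (0:ℝ) t).indicator Δ) :=
    summable_subtype_iff_indicator.mp hsum
  have h2 : Summable (s.indicator g) := by
    refine Summable.of_nonneg_of_le (fun b => ?_) (fun b => ?_) h1
    · exact Set.indicator_nonneg (fun a _ => hg0 a) b
    · by_cases hb : b ∈ s
      · rw [Set.indicator_of_mem hb, Set.indicator_of_mem (hs hb)]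
        exact hgΔ b
      · rw [Set.indicator_of_notMem hb]
        exact Set.indicator_nonneg (fun a _ => hΔnn a) b
  exact summable_subtype_iff_indicator.mpr h2

lemma tsum_split (hΔnn : ∀ s, 0 ≤ Δ s) {g : ℝ → ℝ}
    (hg0 : ∀ x, 0 ≤ g x) (hgΔ : ∀ x, g x ≤ Δ x)
    {u v : ℝ} (hu : 0 ≤ u) (huv : u ≤ v)
    (hsv : Summable fun s : Icc (0:ℝ) v => Δ s) :
    ∑' s : Icc (0:ℝ) v, g s = (∑' s : Icc (0:ℝ) u, g s) + ∑' s : Ioc u v, g s := by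
  have hdisj : Disjoint (Icc (0:ℝ) u) (Ioc u v) := by
    apply Set.disjoint_left.mpr
    rintro x ⟨_, hxu⟩ ⟨hux, _⟩
    exact absurd hxu (not_le.mpr hux)
  have h1 : Summable fun x : Icc (0:ℝ) u => g x :=
    summable_of_subset hΔnn hsv hg0 hgΔ (Icc_subset_Icc le_rfl huv)
  have h2 : Summable fun x : Ioc u v => g x :=
    summable_of_subset hΔnn hsv hg0 hgΔ (fun x hx => ⟨hu.trans hx.1.le, hx.2⟩)
  rw [← Set.Icc_union_Ioc_eq_Icc hu huv]
  exact Summable.tsum_union_disjoint hdisj h1 h2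

lemma tsum_split_right (hΔnn : ∀ s, 0 ≤ Δ s) {g : ℝ → ℝ}
    (hg0 : ∀ x, 0 ≤ g x) (hgΔ : ∀ x, g x ≤ Δ x)
    {u v : ℝ} (hu : 0 ≤ u) (huv : u < v)
    (hsv : Summable fun s : Icc (0:ℝ) v => Δ s) :
    ∑' s : Ioc u v, g s = (∑' s : Ioo u v, g s) + g v := by
  have hdisj : Disjoint (Ioo u v) ({v} : Set ℝ) := by
    apply Set.disjoint_left.mpr
    rintro x ⟨_, hxv⟩ hx
    rw [mem_singleton_iff] at hx
    exact absurd hx (ne_of_lt hxv)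
  have h1 : Summable fun x : Ioo u v => g x :=
    summable_of_subset hΔnn hsv hg0 hgΔ (fun x hx => ⟨hu.trans hx.1.le, hx.2.le⟩)
  have h2 : Summable fun x : ({v} : Set ℝ) => g x :=
    summable_of_subset hΔnn hsv hg0 hgΔ
      (fun x hx => by rw [mem_singleton_iff] at hx; subst hx; exact ⟨hu.trans huv.le, le_rfl⟩)
  rw [← Set.Ioo_union_right huv, Summable.tsum_union_disjoint hdisj h1 h2, tsum_singleton]

noncomputable def lg (Δ : ℝ → ℝ) (s : ℝ) : ℝ := Real.log (1 + Δ s)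

noncomputable def LL (Δ : ℝ → ℝ) (t : ℝ) : ℝ := ∑' s : Icc (0:ℝ) t, lg Δ s

noncomputable def cL (Ac Δ : ℝ → ℝ) (t : ℝ) : ℝ := (Ac t - Ac 0) + LL Δ t

noncomputable def ee (Ac Δ : ℝ → ℝ) (t : ℝ) : ℝ := Real.exp (-(cL Ac Δ t))

variable {Δ Ac : ℝ → ℝ}

lemma one_add_pos (hΔnn : ∀ s, 0 ≤ Δ s) (s : ℝ) : (0:ℝ) < 1 + Δ s := by
  linarith [hΔnn s]

lemma lg_nonneg (hΔnn : ∀ s, 0 ≤ Δ s) (s : ℝ) : 0 ≤ lg Δ s :=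
  Real.log_nonneg (by linarith [hΔnn s])

lemma lg_le (hΔnn : ∀ s, 0 ≤ Δ s) (s : ℝ) : lg Δ s ≤ Δ s := by
  have := Real.log_le_sub_one_of_pos (one_add_pos hΔnn s)
  simpa [lg] using this

lemma lg_ge (hΔnn : ∀ s, 0 ≤ Δ s) (s : ℝ) : Δ s - Δ s * Δ s ≤ lg Δ s := by
  have hp := one_add_pos hΔnn s
  have h1 : Real.log (1 + Δ s)⁻¹ ≤ (1 + Δ s)⁻¹ - 1 :=
    Real.log_le_sub_one_of_pos (inv_pos.mpr hp)
  rw [Real.log_inv] at h1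
  have h2 : 1 - (1 + Δ s)⁻¹ ≤ Real.log (1 + Δ s) := by linarith
  have h3 : Δ s - Δ s * Δ s ≤ 1 - (1 + Δ s)⁻¹ := by
    rw [le_sub_iff_add_le, ← sub_nonneg]
    have hinv : (1 + Δ s)⁻¹ = 1 / (1 + Δ s) := by rw [one_div]
    rw [hinv]
    have : 1 - (Δ s - Δ s * Δ s + 1 / (1 + Δ s)) =
        (Δ s * Δ s * (1 + Δ s) - Δ s * (1 + Δ s) + (1 + Δ s) - 1) / (1 + Δ s) := by
      field_simp
      ring
    rw [this]
    apply div_nonneg _ hp.le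
    nlinarith [hΔnn s]
  exact h3.trans h2

lemma LL_nonneg (hΔnn : ∀ s, 0 ≤ Δ s) (t : ℝ) : 0 ≤ LL Δ t :=
  tsum_nonneg (fun s => lg_nonneg hΔnn s)

lemma LL_neg (ht : t < 0) : LL Δ t = 0 := by
  have h : Icc (0:ℝ) t = ∅ := Icc_eq_empty (by linarith)
  rw [LL, h]
  exact tsum_empty


lemma LL_split (hΔnn : ∀ s, 0 ≤ Δ s) {u v : ℝ} (hu : 0 ≤ u) (huv : u ≤ v)
    (hsv : Summable fun s : Icc (0:ℝ) v => Δ s) :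
    LL Δ v = LL Δ u + ∑' s : Ioc u v, lg Δ s :=
  tsum_split hΔnn (lg_nonneg hΔnn) (lg_le hΔnn) hu huv hsv

lemma cL_monotone (hΔnn : ∀ s, 0 ≤ Δ s) (hAcm : Monotone Ac)
    (hsum : ∀ t, Summable fun s : Icc (0:ℝ) t => Δ s) :
    Monotone (cL Ac Δ) := by
  intro u v huv
  have hAc : Ac u - Ac 0 ≤ Ac v - Ac 0 := by linarith [hAcm huv]
  rcases lt_or_ge v 0 with hv | hv
  · have h1 : LL Δ u = 0 := LL_neg (lt_of_le_of_lt huv hv)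
    have h2 : LL Δ v = 0 := LL_neg hv
    simp only [cL, h1, h2]
    linarith
  · rcases lt_or_ge u 0 with hu | hu
    · have h1 : LL Δ u = 0 := LL_neg hu
      have h2 : 0 ≤ LL Δ v := LL_nonneg hΔnn v
      simp only [cL, h1]
      linarith
    · have h3 := LL_split hΔnn hu huv (hsum v)
      have h4 : 0 ≤ ∑' s : Ioc u v, lg Δ s := tsum_nonneg (fun s => lg_nonneg hΔnn s)
      simp only [cL]
      linarith

lemma ee_pos (t : ℝ) : 0 < ee Ac Δ t := Real.exp_pos _

lemma cL_nonneg (hΔnn : ∀ s, 0 ≤ Δ s) (hAcm : Monotone Ac) {t : ℝ} (ht : 0 ≤ t) :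
    0 ≤ cL Ac Δ t :=
  add_nonneg (by linarith [hAcm ht]) (LL_nonneg hΔnn t)

lemma ee_le_one (hΔnn : ∀ s, 0 ≤ Δ s) (hAcm : Monotone Ac) {t : ℝ} (ht : 0 ≤ t) :
    ee Ac Δ t ≤ 1 := by
  rw [ee, Real.exp_le_one_iff]
  linarith [cL_nonneg hΔnn hAcm ht (Δ := Δ)]

lemma ee_antitone (hΔnn : ∀ s, 0 ≤ Δ s) (hAcm : Monotone Ac)
    (hsum : ∀ t, Summable fun s : Icc (0:ℝ) t => Δ s) :
    Antitone (ee Ac Δ) := by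
  intro u v huv
  rw [ee, ee, Real.exp_le_exp]
  have := cL_monotone hΔnn hAcm hsum huv
  linarith

lemma ee_measurable (hΔnn : ∀ s, 0 ≤ Δ s) (hAcm : Monotone Ac)
    (hsum : ∀ t, Summable fun s : Icc (0:ℝ) t => Δ s) :
    Measurable (ee Ac Δ) :=
  Real.measurable_exp.comp ((cL_monotone hΔnn hAcm hsum).measurable).neg


variable {A : StieltjesFunction ℝ}

lemma meas_Ioc (A : StieltjesFunction ℝ) {u v : ℝ} (huv : u ≤ v) :
    (A.measure (Ioc u v)).toReal = A v - A u := by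
  rw [A.measure_Ioc, ENNReal.toReal_ofReal (sub_nonneg.mpr (A.mono huv))]

lemma meas_Icc_ne_top (A : StieltjesFunction ℝ) (u v : ℝ) :
    A.measure (Icc u v) ≠ ⊤ := by
  rw [A.measure_Icc]; exact ENNReal.ofReal_ne_top

lemma intOn_ee (hΔnn : ∀ s, 0 ≤ Δ s) (hAcm : Monotone Ac)
    (hsum : ∀ t, Summable fun s : Icc (0:ℝ) t => Δ s) {t : ℝ} (ht : 0 ≤ t) :
    IntegrableOn (ee Ac Δ) (Icc 0 t) A.measure := by
  apply Measure.integrableOn_of_bounded (meas_Icc_ne_top A 0 t)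
    ((ee_measurable hΔnn hAcm hsum).aestronglyMeasurable) (M := 1)
  filter_upwards [ae_restrict_mem measurableSet_Icc] with x hx
  rw [Real.norm_eq_abs, abs_of_pos (ee_pos x)]
  exact ee_le_one hΔnn hAcm hx.1

lemma sum_Ioc_Δ (hΔnn : ∀ s, 0 ≤ Δ s)
    (hsum : ∀ t, Summable fun s : Icc (0:ℝ) t => Δ s)
    (hdec : ∀ t, 0 ≤ t → A t = Ac t + ∑' s : Icc (0:ℝ) t, Δ s)
    {u v : ℝ} (hu : 0 ≤ u) (huv : u ≤ v) :
    (Ac v - Ac u) + ∑' s : Ioc u v, Δ s = A v - A u := by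
  have h1 := hdec v (hu.trans huv)
  have h2 := hdec u hu
  have h3 := tsum_split hΔnn hΔnn (fun x => le_rfl) hu huv (hsum v)
  linarith

lemma ee_ratio (hΔnn : ∀ s, 0 ≤ Δ s)
    (hsum : ∀ t, Summable fun s : Icc (0:ℝ) t => Δ s)
    {u v : ℝ} (hu : 0 ≤ u) (huv : u ≤ v) :
    ee Ac Δ v = ee Ac Δ u * Real.exp (-((Ac v - Ac u) + ∑' s : Ioc u v, lg Δ s)) := by
  rw [ee, ee, ← Real.exp_add]
  congr 1
  have := LL_split hΔnn hu huv (hsum v)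
  simp only [cL]
  linarith


lemma exp_neg_le (x : ℝ) (hx : 0 ≤ x) : Real.exp (-x) ≤ 1 - x + x * x := by
  have h1 : 1 + x ≤ Real.exp x := by linarith [Real.add_one_le_exp x]
  have hp : (0:ℝ) < 1 + x := by linarith
  have h2 : Real.exp (-x) ≤ (1 + x)⁻¹ := by
    rw [Real.exp_neg]
    exact inv_anti₀ hp h1
  have h3 : (1 + x)⁻¹ ≤ 1 - x + x * x := by
    rw [inv_le_iff_one_le_mul₀ hp]
    nlinarith
  linarith

lemma step_est (hΔnn : ∀ s, 0 ≤ Δ s) (hAcm : Monotone Ac)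
    (hsum : ∀ t, Summable fun s : Icc (0:ℝ) t => Δ s)
    (hdec : ∀ t, 0 ≤ t → A t = Ac t + ∑' s : Icc (0:ℝ) t, Δ s)
    {u v : ℝ} (hu : 0 ≤ u) (huv : u ≤ v) :
    |(∫ s in Ioc u v, ee Ac Δ s ∂A.measure) - (ee Ac Δ u - ee Ac Δ v)|
      ≤ 2 * (A v - A u) * (A v - A u) := by
  set μ := A.measure
  set m : ℝ := A v - A u with hm_def
  set Δc : ℝ := Ac v - Ac u with hΔc_def
  set D : ℝ := ∑' s : Ioc u v, Δ s with hD_def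
  set ℓ : ℝ := ∑' s : Ioc u v, lg Δ s with hℓ_def
  have hΔD : Δc + D = m := sum_Ioc_Δ hΔnn hsum hdec hu huv
  have hΔc0 : 0 ≤ Δc := sub_nonneg.mpr (hAcm huv)
  have hD0 : 0 ≤ D := tsum_nonneg (fun s => hΔnn s)
  have hm0 : 0 ≤ m := sub_nonneg.mpr (A.mono huv)
  have hsubIoc : Ioc u v ⊆ Icc 0 v := fun x hx => ⟨hu.trans hx.1.le, hx.2⟩
  have hsumD : Summable fun s : Ioc u v => Δ s :=
    summable_of_subset hΔnn (hsum v) hΔnn (fun x => le_rfl) hsubIoc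
  have hsuml : Summable fun s : Ioc u v => lg Δ s :=
    summable_of_subset hΔnn (hsum v) (lg_nonneg hΔnn) (lg_le hΔnn) hsubIoc
  have hsumD2 : Summable fun s : Ioc u v => Δ s * Δ s := by
    refine Summable.of_nonneg_of_le (fun b : Ioc u v => mul_nonneg (hΔnn b.1) (hΔnn b.1))
      (fun b : Ioc u v => ?_) (hsumD.mul_left D)
    exact mul_le_mul_of_nonneg_right (Summable.le_tsum hsumD b (fun j _ => hΔnn j.1)) (hΔnn b.1)
  have hl0 : 0 ≤ ℓ := tsum_nonneg (fun s => lg_nonneg hΔnn s)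
  have hlD : ℓ ≤ D := Summable.tsum_le_tsum (fun s => lg_le hΔnn s) hsuml hsumD
  have hD2 : (∑' s : Ioc u v, Δ s * Δ s) ≤ D * D := by
    have h1 : (∑' s : Ioc u v, Δ s * Δ s) ≤ ∑' s : Ioc u v, D * Δ s := by
      refine Summable.tsum_le_tsum (fun s : Ioc u v => ?_) hsumD2 (hsumD.mul_left D)
      exact mul_le_mul_of_nonneg_right (Summable.le_tsum hsumD s (fun j _ => hΔnn j.1)) (hΔnn s.1)
    rw [tsum_mul_left] at h1
    exact h1
  have hlD2 : D - D * D ≤ ℓ := by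
    have h1 : (∑' s : Ioc u v, (Δ s - Δ s * Δ s)) ≤ ℓ :=
      Summable.tsum_le_tsum (fun s => lg_ge hΔnn s) (hsumD.sub hsumD2) hsuml
    rw [Summable.tsum_sub hsumD hsumD2] at h1
    linarith
  set x : ℝ := Δc + ℓ with hx_def
  have hx0 : 0 ≤ x := add_nonneg hΔc0 hl0
  have hx1 : x ≤ m := by linarith
  have hDm : D ≤ m := by linarith
  have hx2 : m - m * m ≤ x := by nlinarith
  have hratio : ee Ac Δ v = ee Ac Δ u * Real.exp (-x) := ee_ratio hΔnn hsum hu huv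
  have heu0 : 0 < ee Ac Δ u := ee_pos u
  have heu1 : ee Ac Δ u ≤ 1 := ee_le_one hΔnn hAcm hu
  have hIoc_int : IntegrableOn (ee Ac Δ) (Ioc u v) μ :=
    (intOn_ee hΔnn hAcm hsum (hu.trans huv)).mono_set hsubIoc
  have hconst_int : ∀ c : ℝ, IntegrableOn (fun _ => c) (Ioc u v) μ := fun c =>
    (integrableOn_const_iff (C := c)).mpr (Or.inr (by rw [A.measure_Ioc]; exact ENNReal.ofReal_lt_top))
  have hmeas : (μ (Ioc u v)).toReal = m := meas_Ioc A huv
  have hIub : (∫ s in Ioc u v, ee Ac Δ s ∂μ) ≤ ee Ac Δ u * m := by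
    have h1 : (∫ s in Ioc u v, ee Ac Δ s ∂μ) ≤ ∫ _ in Ioc u v, ee Ac Δ u ∂μ :=
      setIntegral_mono_on hIoc_int (hconst_int _) measurableSet_Ioc
        (fun s hs => ee_antitone hΔnn hAcm hsum hs.1.le)
    rw [setIntegral_const, measureReal_def, hmeas, smul_eq_mul, mul_comm] at h1
    exact h1
  have hIlb : ee Ac Δ v * m ≤ ∫ s in Ioc u v, ee Ac Δ s ∂μ := by
    have h1 : (∫ _ in Ioc u v, ee Ac Δ v ∂μ) ≤ ∫ s in Ioc u v, ee Ac Δ s ∂μ :=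
      setIntegral_mono_on (hconst_int _) hIoc_int measurableSet_Ioc
        (fun s hs => ee_antitone hΔnn hAcm hsum hs.2)
    rw [setIntegral_const, measureReal_def, hmeas, smul_eq_mul, mul_comm] at h1
    exact h1
  have hexp1 : 1 - x ≤ Real.exp (-x) := by linarith [Real.add_one_le_exp (-x)]
  have hexp2 : Real.exp (-x) ≤ 1 - x + x * x := exp_neg_le x hx0
  clear_value x m Δc D ℓ
  rw [abs_le]
  set E := ee Ac Δ u with hE
  set y := Real.exp (-x) with hy
  have hEy : E * y * m ≤ ∫ s in Ioc u v, ee Ac Δ s ∂μ := by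
    rw [hratio] at hIlb
    linarith
  have hy1 : 1 - x ≤ y := hexp1
  have hy2 : y ≤ 1 - x + x * x := hexp2
  clear_value E y
  rw [hratio]
  constructor
  · rcases le_or_gt 0 (y * m + y - 1) with hz0 | hz0
    · linarith [hEy, mul_nonneg heu0.le hz0, mul_nonneg hm0 hm0]
    · have hz2 : -(m*m) ≤ y * m + y - 1 := by
        linarith [mul_le_mul_of_nonneg_right hy1 hm0, mul_le_mul_of_nonneg_right hx1 hm0]
      have hprod : 0 ≤ (1 - E) * (-(y * m + y - 1)) :=
        mul_nonneg (by linarith) (by linarith)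
      linarith [hEy, hprod, hz2, mul_nonneg hm0 hm0]
  · have hc0 : 0 ≤ m - x + x*x := by linarith [mul_self_nonneg x]
    have h5 : E * (m - x + x*x) ≤ m - x + x*x := mul_le_of_le_one_left hc0 heu1
    have h6 : E * y ≤ E * (1 - x + x*x) := mul_le_mul_of_nonneg_left hy2 heu0.le
    linarith [hIub, h5, h6, hx2, mul_le_mul hx1 hx1 hx0 hm0]


lemma setIntegral_singleton' (f : ℝ → ℝ) (μ : Measure ℝ) (p : ℝ) :
    ∫ s in {p}, f s ∂μ = (μ {p}).toReal * f p := by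
  have h1 : ∫ s in {p}, f s ∂μ = ∫ _ in ({p} : Set ℝ), f p ∂μ :=
    setIntegral_congr_fun (measurableSet_singleton p)
      (fun x hx => by rw [mem_singleton_iff] at hx; rw [hx])
  rw [h1, setIntegral_const, measureReal_def, smul_eq_mul]

lemma mu_singleton (A : StieltjesFunction ℝ) (hΔ : ∀ s, Δ s = A s - Function.leftLim A s)
    (hΔnn : ∀ s, 0 ≤ Δ s) (p : ℝ) : (A.measure {p}).toReal = Δ p := by
  rw [A.measure_singleton, ← hΔ p, ENNReal.toReal_ofReal (hΔnn p)]

lemma intOn_ee_sub (hΔnn : ∀ s, 0 ≤ Δ s) (hAcm : Monotone Ac)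
    (hsum : ∀ t, Summable fun s : Icc (0:ℝ) t => Δ s) {t : ℝ} (ht : 0 ≤ t)
    {s : Set ℝ} (hs : s ⊆ Icc 0 t) :
    IntegrableOn (ee Ac Δ) s A.measure :=
  (intOn_ee hΔnn hAcm hsum ht).mono_set hs

lemma rho_split (hΔnn : ∀ s, 0 ≤ Δ s) (hAcm : Monotone Ac)
    (hsum : ∀ t, Summable fun s : Icc (0:ℝ) t => Δ s)
    {u v : ℝ} (hu : 0 ≤ u) (huv : u ≤ v) :
    ∫ s in Icc 0 v, ee Ac Δ s ∂A.measure
      = (∫ s in Icc 0 u, ee Ac Δ s ∂A.measure) + ∫ s in Ioc u v, ee Ac Δ s ∂A.measure := by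
  have hdisj : Disjoint (Icc (0:ℝ) u) (Ioc u v) := by
    apply Set.disjoint_left.mpr
    rintro x ⟨_, hxu⟩ ⟨hux, _⟩
    exact absurd hxu (not_le.mpr hux)
  rw [← Set.Icc_union_Ioc_eq_Icc hu huv]
  exact setIntegral_union hdisj measurableSet_Ioc
    (intOn_ee_sub hΔnn hAcm hsum (hu.trans huv) (Icc_subset_Icc le_rfl huv))
    (intOn_ee_sub hΔnn hAcm hsum (hu.trans huv) (fun x hx => ⟨hu.trans hx.1.le, hx.2⟩))

lemma ee_zero (hΔnn : ∀ s, 0 ≤ Δ s) : ee Ac Δ 0 = (1 + Δ 0)⁻¹ := by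
  have h1 : LL Δ 0 = lg Δ 0 := by
    rw [LL, Set.Icc_self, tsum_singleton]
  rw [ee, cL, h1, lg, sub_self, zero_add, Real.exp_neg,
    Real.exp_log (one_add_pos hΔnn 0)]

lemma rho_zero (A : StieltjesFunction ℝ) (hΔ : ∀ s, Δ s = A s - Function.leftLim A s)
    (hΔnn : ∀ s, 0 ≤ Δ s) :
    ∫ s in Icc (0:ℝ) 0, ee Ac Δ s ∂A.measure = 1 - ee Ac Δ 0 := by
  rw [Set.Icc_self, setIntegral_singleton' _ _ 0, mu_singleton A hΔ hΔnn 0,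
    ee_zero hΔnn]
  have hp := one_add_pos hΔnn 0
  field_simp
  ring

lemma tendsto_left (A : StieltjesFunction ℝ) (hAcc : Continuous Ac) (hAcm : Monotone Ac)
    (hΔ : ∀ s, Δ s = A s - Function.leftLim A s) (hΔnn : ∀ s, 0 ≤ Δ s)
    (hsum : ∀ t, Summable fun s : Icc (0:ℝ) t => Δ s)
    (hdec : ∀ t, 0 ≤ t → A t = Ac t + ∑' s : Icc (0:ℝ) t, Δ s)
    {τ : ℝ} (hτ : 0 < τ) :
    Tendsto (fun u => (∫ s in Ioc u τ, ee Ac Δ s ∂A.measure) + (ee Ac Δ τ - ee Ac Δ u))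
      (𝓝[Ico 0 τ] τ) (𝓝 0) := by
  set μ := A.measure with hμ
  set lf := 𝓝[Ico (0:ℝ) τ] τ with hlf
  have hmem : ∀ᶠ u in lf, u ∈ Ico (0:ℝ) τ := eventually_mem_nhdsWithin
  have hA : Tendsto (fun u => A u) lf (𝓝 (Function.leftLim A τ)) :=
    (A.mono.tendsto_leftLim τ).mono_left (nhdsWithin_mono τ Ico_subset_Iio_self)
  have hAc : Tendsto Ac lf (𝓝 (Ac τ)) := (hAcc.tendsto τ).mono_left nhdsWithin_le_nhds
  -- the Ioo integral tends to 0
  have hIoo : Tendsto (fun u => ∫ s in Ioo u τ, ee Ac Δ s ∂μ) lf (𝓝 0) := by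
    have e1 : ∀ᶠ u in lf, 0 ≤ ∫ s in Ioo u τ, ee Ac Δ s ∂μ :=
      hmem.mono fun u _ =>
        setIntegral_nonneg measurableSet_Ioo (fun x _ => (ee_pos x).le)
    have e2 : ∀ᶠ u in lf, (∫ s in Ioo u τ, ee Ac Δ s ∂μ) ≤ Function.leftLim A τ - A u := by
      refine hmem.mono fun u hu => ?_
      have hle : ∫ s in Ioo u τ, ee Ac Δ s ∂μ ≤ ∫ _ in Ioo u τ, (1:ℝ) ∂μ := by
        refine setIntegral_mono_on
          (intOn_ee_sub hΔnn hAcm hsum hτ.le (fun x hx => ⟨hu.1.trans hx.1.le, hx.2.le⟩))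
          ((integrableOn_const_iff (C := (1:ℝ))).mpr (Or.inr ?_)) measurableSet_Ioo
          (fun x hx => ee_le_one hΔnn hAcm (hu.1.trans hx.1.le))
        rw [A.measure_Ioo]; exact ENNReal.ofReal_lt_top
      rw [setIntegral_const, measureReal_def, smul_eq_mul, mul_one, A.measure_Ioo,
        ENNReal.toReal_ofReal (sub_nonneg.mpr (A.mono.le_leftLim hu.2))] at hle
      exact hle
    have e3 : Tendsto (fun u => Function.leftLim A τ - A u) lf (𝓝 0) := by
      have := tendsto_const_nhds (α := ℝ) (x := Function.leftLim A τ) (f := lf)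
      simpa using this.sub hA
    exact squeeze_zero' e1 e2 e3
  -- jump sums over Ioo tend to 0
  have hr : Tendsto (fun u => ∑' s : Ioo u τ, lg Δ s) lf (𝓝 0) := by
    have e1 : ∀ᶠ u in lf, 0 ≤ ∑' s : Ioo u τ, lg Δ s :=
      hmem.mono fun u _ => tsum_nonneg (fun s : Ioo u τ => lg_nonneg hΔnn s)
    have e2 : ∀ᶠ u in lf,
        (∑' s : Ioo u τ, lg Δ s) ≤ (A τ - A u) - (Ac τ - Ac u) - Δ τ := by
      refine hmem.mono fun u hu => ?_
      have hsub : Ioo u τ ⊆ Icc 0 τ := fun x hx => ⟨hu.1.trans hx.1.le, hx.2.le⟩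
      have h1 : (∑' s : Ioo u τ, lg Δ s) ≤ ∑' s : Ioo u τ, Δ s :=
        Summable.tsum_le_tsum (fun s : Ioo u τ => lg_le hΔnn s)
          (summable_of_subset hΔnn (hsum τ) (lg_nonneg hΔnn) (lg_le hΔnn) hsub)
          (summable_of_subset hΔnn (hsum τ) hΔnn (fun x => le_rfl) hsub)
      have h2 := tsum_split_right hΔnn hΔnn (fun x => le_rfl) hu.1 hu.2 (hsum τ)
      have h3 := sum_Ioc_Δ (A := A) hΔnn hsum hdec hu.1 hu.2.le
      linarith
    have e3 : Tendsto (fun u => (A τ - A u) - (Ac τ - Ac u) - Δ τ) lf (𝓝 0) := by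
      have h4 : Tendsto (fun u => (A τ - A u) - (Ac τ - Ac u) - Δ τ) lf
          (𝓝 ((A τ - Function.leftLim A τ) - (Ac τ - Ac τ) - Δ τ)) :=
        ((tendsto_const_nhds.sub hA).sub (tendsto_const_nhds.sub hAc)).sub tendsto_const_nhds
      have h5 : (A τ - Function.leftLim A τ) - (Ac τ - Ac τ) - Δ τ = 0 := by
        rw [← hΔ τ]; ring
      rwa [h5] at h4
    exact squeeze_zero' e1 e2 e3
  -- LL tends to LL τ - lg τ
  have hLLid : ∀ᶠ u in lf, LL Δ τ - lg Δ τ - (∑' s : Ioo u τ, lg Δ s) = LL Δ u := by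
    refine hmem.mono fun u hu => ?_
    have h1 := LL_split hΔnn hu.1 hu.2.le (hsum τ)
    have h2 := tsum_split_right hΔnn (lg_nonneg hΔnn) (lg_le hΔnn) hu.1 hu.2 (hsum τ)
    linarith
  have hLL : Tendsto (LL Δ) lf (𝓝 (LL Δ τ - lg Δ τ)) := by
    have h6 : Tendsto (fun u => LL Δ τ - lg Δ τ - (∑' s : Ioo u τ, lg Δ s)) lf
        (𝓝 (LL Δ τ - lg Δ τ - 0)) := tendsto_const_nhds.sub hr
    rw [sub_zero] at h6
    exact Tendsto.congr' hLLid h6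
  -- ee tends to ee τ * (1 + Δ τ)
  have hee : Tendsto (ee Ac Δ) lf (𝓝 (ee Ac Δ τ * (1 + Δ τ))) := by
    have h7 : Tendsto (fun u => -((Ac u - Ac 0) + LL Δ u)) lf
        (𝓝 (-((Ac τ - Ac 0) + (LL Δ τ - lg Δ τ)))) :=
      (((hAc.sub tendsto_const_nhds).add hLL)).neg
    have h8 := (Real.continuous_exp.tendsto _).comp h7
    have h9 : Real.exp (-((Ac τ - Ac 0) + (LL Δ τ - lg Δ τ)))
        = ee Ac Δ τ * (1 + Δ τ) := by
      rw [ee, cL]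
      rw [show -((Ac τ - Ac 0) + (LL Δ τ - lg Δ τ)) = -((Ac τ - Ac 0) + LL Δ τ) + lg Δ τ by ring]
      rw [Real.exp_add, lg, Real.exp_log (one_add_pos hΔnn τ)]
    rw [h9] at h8
    exact h8
  -- identity for the Ioc integral
  have hIocid : ∀ᶠ u in lf,
      (∫ s in Ioo u τ, ee Ac Δ s ∂μ) + Δ τ * ee Ac Δ τ = ∫ s in Ioc u τ, ee Ac Δ s ∂μ := by
    refine hmem.mono fun u hu => ?_
    have hdisj : Disjoint (Ioo u τ) ({τ} : Set ℝ) := by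
      apply Set.disjoint_left.mpr
      rintro x ⟨_, hxv⟩ hx
      rw [mem_singleton_iff] at hx
      exact absurd hx (ne_of_lt hxv)
    have hun : Ioo u τ ∪ {τ} = Ioc u τ := Set.Ioo_union_right hu.2
    rw [← hun, setIntegral_union hdisj (measurableSet_singleton τ)
      (intOn_ee_sub hΔnn hAcm hsum hτ.le (fun x hx => ⟨hu.1.trans hx.1.le, hx.2.le⟩))
      (intOn_ee_sub hΔnn hAcm hsum hτ.le
        (fun x hx => by rw [mem_singleton_iff] at hx; subst hx; exact ⟨hτ.le, le_rfl⟩)),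
      setIntegral_singleton' _ _ τ, mu_singleton A hΔ hΔnn τ]
  -- assemble
  have hfin : Tendsto (fun u => ((∫ s in Ioo u τ, ee Ac Δ s ∂μ) + Δ τ * ee Ac Δ τ)
      + (ee Ac Δ τ - ee Ac Δ u)) lf
      (𝓝 ((0 + Δ τ * ee Ac Δ τ) + (ee Ac Δ τ - ee Ac Δ τ * (1 + Δ τ)))) :=
    (hIoo.add tendsto_const_nhds).add (tendsto_const_nhds.sub hee)
  have hval : (0 + Δ τ * ee Ac Δ τ) + (ee Ac Δ τ - ee Ac Δ τ * (1 + Δ τ)) = 0 := by ring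
  rw [hval] at hfin
  apply Tendsto.congr' _ hfin
  exact hIocid.mono fun u hu => by dsimp only; rw [hu]

lemma key_integral (A : StieltjesFunction ℝ) (hAcc : Continuous Ac) (hAcm : Monotone Ac)
    (hΔ : ∀ s, Δ s = A s - Function.leftLim A s) (hΔnn : ∀ s, 0 ≤ Δ s)
    (hsum : ∀ t, Summable fun s : Icc (0:ℝ) t => Δ s)
    (hdec : ∀ t, 0 ≤ t → A t = Ac t + ∑' s : Icc (0:ℝ) t, Δ s)
    {t : ℝ} (ht : 0 ≤ t) :
    ∫ s in Icc 0 t, ee Ac Δ s ∂A.measure = 1 - ee Ac Δ t := by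
  set μ := A.measure with hμdef
  set F : ℝ → ℝ := fun v => (∫ s in Icc 0 v, ee Ac Δ s ∂μ) + ee Ac Δ v - 1 with hF
  suffices hFt : F t = 0 by
    simp only [hF] at hFt
    linarith
  have hmain : ∀ η : ℝ, 0 < η → |F t| ≤ 2 * η * (A t - A 0) := by
    intro η hη
    set S : Set ℝ := {v | v ∈ Icc 0 t ∧ |F v| ≤ 2 * η * (A v - A 0)} with hS
    have h0S : (0:ℝ) ∈ S := by
      refine ⟨⟨le_rfl, ht⟩, ?_⟩
      have h1 : F 0 = 0 := by
        simp only [hF]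
        have := rho_zero (Ac := Ac) A hΔ hΔnn
        linarith
      rw [h1, abs_zero, sub_self, mul_zero]
    have hSne : S.Nonempty := ⟨0, h0S⟩
    have hbdd : BddAbove S := ⟨t, fun x hx => hx.1.2⟩
    set τ := sSup S with hτdef
    have hτmem : 0 ≤ τ := le_csSup hbdd h0S
    have hτt : τ ≤ t := csSup_le hSne (fun x hx => hx.1.2)
    have hFdiff : ∀ u v : ℝ, 0 ≤ u → u ≤ v →
        |F v - F u| ≤ 2 * (A v - A u) * (A v - A u) := by
      intro u v hu huv
      have h1 := rho_split (A := A) hΔnn hAcm hsum hu huv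
      have h2 := step_est (A := A) hΔnn hAcm hsum hdec hu huv
      have h3 : F v - F u = (∫ s in Ioc u v, ee Ac Δ s ∂μ) - (ee Ac Δ u - ee Ac Δ v) := by
        simp only [hF]
        linarith
      rw [h3]
      exact h2
    have hτS : τ ∈ S := by
      rcases eq_or_lt_of_le hτmem with heq | hpos
      · exact heq ▸ h0S
      by_cases hin : τ ∈ S
      · exact hin
      have htd := tendsto_left A hAcc hAcm hΔ hΔnn hsum hdec hpos
      have hFid : ∀ u, 0 ≤ u → u < τ →
          F τ - F u = (∫ s in Ioc u τ, ee Ac Δ s ∂μ) + (ee Ac Δ τ - ee Ac Δ u) := by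
        intro u hu huτ
        have h1 := rho_split (A := A) hΔnn hAcm hsum hu huτ.le
        simp only [hF]
        linarith
      refine ⟨⟨hτmem, hτt⟩, ?_⟩
      have hεbound : ∀ ε : ℝ, 0 < ε → |F τ| ≤ 2 * η * (A τ - A 0) + ε := by
        intro ε hε
        have hev : ∀ᶠ u in 𝓝[Ico 0 τ] τ,
            |(∫ s in Ioc u τ, ee Ac Δ s ∂μ) + (ee Ac Δ τ - ee Ac Δ u)| < ε := by
          have h5 := Metric.tendsto_nhds.mp htd ε hε
          refine h5.mono fun u hu => ?_
          rwa [Real.dist_eq, sub_zero] at hu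
        rcases mem_nhdsWithin.mp hev with ⟨U, hUo, hτU, hUsub⟩
        rcases Metric.isOpen_iff.mp hUo τ hτU with ⟨δ, hδ, hball⟩
        obtain ⟨u, huS, huδ⟩ := exists_lt_of_lt_csSup hSne (show τ - δ < τ by linarith)
        have huτ : u ≤ τ := le_csSup hbdd huS
        have hune : u ≠ τ := fun h => hin (h ▸ huS)
        have hu0 : 0 ≤ u := huS.1.1
        have huIco : u ∈ Ico 0 τ := ⟨hu0, lt_of_le_of_ne huτ hune⟩
        have huU : u ∈ U := by
          apply hball
          rw [Metric.mem_ball, Real.dist_eq, abs_sub_lt_iff]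
          constructor <;> linarith [huIco.2]
        have h6 : |F τ - F u| < ε := by
          rw [hFid u hu0 huIco.2]
          exact hUsub ⟨huU, huIco⟩
        have h7 : |F u| ≤ 2 * η * (A u - A 0) := huS.2
        have h8 : A u ≤ A τ := A.mono huτ
        have h9 : |F τ| ≤ |F u| + |F τ - F u| := by
          have := abs_add_le (F u) (F τ - F u)
          simpa using this
        have h10 : 2 * η * (A u - A 0) ≤ 2 * η * (A τ - A 0) := by nlinarith
        linarith
      by_contra hcon
      push_neg at hcon
      have := hεbound ((|F τ| - 2 * η * (A τ - A 0)) / 2) (by linarith)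
      linarith
    rcases lt_or_eq_of_le hτt with hlt | heqt
    · exfalso
      have hrc : Tendsto A (𝓝[Ici τ] τ) (𝓝 (A τ)) := A.right_continuous τ
      have hev : ∀ᶠ v in 𝓝[Ici τ] τ, A v < A τ + η :=
        hrc.eventually_lt_const (by linarith)
      rcases mem_nhdsGE_iff_exists_Ico_subset.mp hev with ⟨w, hw, hsub⟩
      rw [mem_Ioi] at hw
      set v₀ := min ((τ + w)/2) t with hv₀
      have hτv₀ : τ < v₀ := lt_min (by linarith) hlt
      have hv₀t : v₀ ≤ t := min_le_right _ _
      have hv₀w : v₀ < w := lt_of_le_of_lt (min_le_left _ _) (by linarith)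
      have hAv₀ : A v₀ - A τ < η := by
        have := hsub ⟨hτv₀.le, hv₀w⟩
        rw [mem_setOf_eq] at this
        linarith
      have hm0 : (0:ℝ) ≤ A v₀ - A τ := sub_nonneg.mpr (A.mono hτv₀.le)
      have hstep := hFdiff τ v₀ hτmem hτv₀.le
      have hv₀S : v₀ ∈ S := by
        refine ⟨⟨hτmem.trans hτv₀.le, hv₀t⟩, ?_⟩
        have h9 : |F v₀| ≤ |F τ| + |F v₀ - F τ| := by
          have := abs_add_le (F τ) (F v₀ - F τ)
          simpa using this
        have h10 := hτS.2
        have h11 : 2 * (A v₀ - A τ) * (A v₀ - A τ) ≤ 2 * η * (A v₀ - A τ) := by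
          nlinarith
        have h12 : A τ ≤ A v₀ := A.mono hτv₀.le
        nlinarith
      have := le_csSup hbdd hv₀S
      linarith
    · exact heqt ▸ hτS.2
  have hC : 0 ≤ A t - A 0 := sub_nonneg.mpr (A.mono ht)
  have habs : |F t| ≤ 0 := by
    by_contra hcon
    push_neg at hcon
    have h1 := hmain (|F t| / (4 * (A t - A 0) + 4)) (by positivity)
    have h2 : 0 < 4 * (A t - A 0) + 4 := by linarith
    have h3 : 2 * (|F t| / (4 * (A t - A 0) + 4)) * (A t - A 0)
        = 2 * |F t| * (A t - A 0) / (4 * (A t - A 0) + 4) := by ring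
    rw [h3, le_div_iff₀ h2] at h1
    nlinarith
  have := abs_nonneg (F t)
  have : |F t| = 0 := le_antisymm habs this
  exact abs_eq_zero.mp this

lemma tprod_eq_exp (hΔnn : ∀ s, 0 ≤ Δ s)
    (hsum : ∀ t, Summable fun s : Icc (0:ℝ) t => Δ s) (t : ℝ) :
    ∏' s : Icc (0:ℝ) t, (1 + Δ s)⁻¹ = Real.exp (-(LL Δ t)) := by
  have hs : Summable fun s : Icc (0:ℝ) t => lg Δ s :=
    summable_of_subset hΔnn (hsum t) (lg_nonneg hΔnn) (lg_le hΔnn) (fun x hx => hx)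
  have h2 : HasSum (fun s : Icc (0:ℝ) t => -(lg Δ s)) (-(LL Δ t)) := hs.hasSum.neg
  have h3 := h2.rexp
  have h4 : (Real.exp ∘ fun s : Icc (0:ℝ) t => -(lg Δ s))
      = fun s : Icc (0:ℝ) t => (1 + Δ s)⁻¹ := by
    funext s
    simp only [Function.comp_apply, lg, Real.exp_neg,
      Real.exp_log (one_add_pos hΔnn s.1)]
  rw [h4] at h3
  exact h3.tprod_eq

lemma gronwall (A : StieltjesFunction ℝ) {φ : ℝ → ℝ} {T : ℝ} (hT : 0 ≤ T)
    (hint : IntegrableOn φ (Icc 0 T) A.measure)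
    (heq : ∀ s, 0 ≤ s → s ≤ T → φ s = -∫ x in Icc 0 s, φ x ∂A.measure) :
    ∀ s, 0 ≤ s → s ≤ T → φ s = 0 := by
  set μ := A.measure with hμdef
  have habs : IntegrableOn (fun x => |φ x|) (Icc 0 T) μ := hint.abs
  have hbasic : ∀ s, 0 ≤ s → s ≤ T → |φ s| ≤ ∫ x in Ico 0 s, |φ x| ∂μ := by
    intro s h0 hsT
    have hIcc : IntegrableOn φ (Icc 0 s) μ := hint.mono_set (Icc_subset_Icc le_rfl hsT)
    have hIco : IntegrableOn φ (Ico 0 s) μ := hIcc.mono_set Ico_subset_Icc_self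
    have hsing : IntegrableOn φ ({s} : Set ℝ) μ :=
      hIcc.mono_set (by intro x hx; rw [mem_singleton_iff] at hx; subst hx; exact ⟨h0, le_rfl⟩)
    have hdisj : Disjoint (Ico 0 s) ({s} : Set ℝ) := by
      apply Set.disjoint_left.mpr
      rintro x ⟨_, hxs⟩ hx
      rw [mem_singleton_iff] at hx
      exact absurd hx (ne_of_lt hxs)
    have hsplit : ∫ x in Icc 0 s, φ x ∂μ
        = (∫ x in Ico 0 s, φ x ∂μ) + ∫ x in {s}, φ x ∂μ := by
      rw [← Set.Ico_union_right h0]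
      exact setIntegral_union hdisj (measurableSet_singleton s) hIco hsing
    have hsingval : ∫ x in {s}, φ x ∂μ = (μ {s}).toReal * φ s :=
      setIntegral_singleton' φ μ s
    have heqs := heq s h0 hsT
    rw [hsplit, hsingval] at heqs
    have hc0 : 0 ≤ (μ {s}).toReal := ENNReal.toReal_nonneg
    have h5 : |φ s| * (1 + (μ {s}).toReal) = |∫ x in Ico 0 s, φ x ∂μ| := by
      rw [show (∫ x in Ico 0 s, φ x ∂μ) = -(φ s * (1 + (μ {s}).toReal)) by linarith]
      rw [abs_neg, abs_mul, abs_of_nonneg (by linarith : (0:ℝ) ≤ 1 + (μ {s}).toReal)]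
    have h6 : |∫ x in Ico 0 s, φ x ∂μ| ≤ ∫ x in Ico 0 s, |φ x| ∂μ := by
      have := norm_integral_le_integral_norm (μ := μ.restrict (Ico 0 s)) φ
      simpa [Real.norm_eq_abs] using this
    have h7 : |φ s| ≤ |φ s| * (1 + (μ {s}).toReal) :=
      le_mul_of_one_le_right (abs_nonneg _) (by linarith)
    linarith
  set C := ∫ x in Icc 0 T, |φ x| ∂μ with hC
  have hCb : ∀ s, 0 ≤ s → s ≤ T → |φ s| ≤ C := by
    intro s h0 hsT
    refine (hbasic s h0 hsT).trans ?_
    apply setIntegral_mono_set habs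
      (Filter.Eventually.of_forall (fun x => abs_nonneg (φ x)))
    exact HasSubset.Subset.eventuallyLE (Ico_subset_Icc_self.trans (Icc_subset_Icc le_rfl hsT))
  set S : Set ℝ := {v | v ∈ Icc 0 T ∧ ∀ s ∈ Icc (0:ℝ) v, φ s = 0} with hS
  have h0S : (0:ℝ) ∈ S := by
    refine ⟨⟨le_rfl, hT⟩, fun s hs => ?_⟩
    have hs0 : s = 0 := le_antisymm hs.2 hs.1
    subst hs0
    have := hbasic 0 le_rfl hT
    rw [Ico_self] at this
    simp only [Measure.restrict_empty, integral_zero_measure] at this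
    exact abs_eq_zero.mp (le_antisymm this (abs_nonneg _))
  have hSne : S.Nonempty := ⟨0, h0S⟩
  have hbdd : BddAbove S := ⟨T, fun x hx => hx.1.2⟩
  set τ := sSup S with hτdef
  have hτ0 : 0 ≤ τ := le_csSup hbdd h0S
  have hτT : τ ≤ T := csSup_le hSne (fun x hx => hx.1.2)
  have hτzero : ∀ s, 0 ≤ s → s < τ → φ s = 0 := by
    intro s h0 hsτ
    obtain ⟨v, hvS, hv⟩ := exists_lt_of_lt_csSup hSne hsτ
    exact hvS.2 s ⟨h0, hv.le⟩
  have hφτ : φ τ = 0 := by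
    have h1 := hbasic τ hτ0 hτT
    have h2 : ∫ x in Ico 0 τ, |φ x| ∂μ = 0 := by
      rw [show (∫ x in Ico 0 τ, |φ x| ∂μ) = ∫ _ in Ico 0 τ, (0:ℝ) ∂μ from
        setIntegral_congr_fun measurableSet_Ico
          (fun x hx => by rw [hτzero x hx.1 hx.2, abs_zero])]
      simp
    rw [h2] at h1
    exact abs_eq_zero.mp (le_antisymm h1 (abs_nonneg _))
  have hτS : τ ∈ S := by
    refine ⟨⟨hτ0, hτT⟩, fun s hs => ?_⟩
    rcases lt_or_eq_of_le hs.2 with h | h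
    · exact hτzero s hs.1 h
    · exact h ▸ hφτ
  rcases lt_or_eq_of_le hτT with hlt | heqt
  · exfalso
    have hrc : Tendsto A (𝓝[Ici τ] τ) (𝓝 (A τ)) := A.right_continuous τ
    have hev : ∀ᶠ v in 𝓝[Ici τ] τ, A v < A τ + 1/2 :=
      hrc.eventually_lt_const (by linarith)
    rcases mem_nhdsGE_iff_exists_Ico_subset.mp hev with ⟨w, hw, hsub⟩
    rw [mem_Ioi] at hw
    set v₀ := min ((τ + w)/2) T with hv₀
    have hτv₀ : τ < v₀ := lt_min (by linarith) hlt
    have hv₀T : v₀ ≤ T := min_le_right _ _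
    have hv₀w : v₀ < w := lt_of_le_of_lt (min_le_left _ _) (by linarith)
    have hAv₀ : A v₀ - A τ ≤ 1/2 := by
      have := hsub ⟨hτv₀.le, hv₀w⟩
      rw [mem_setOf_eq] at this
      linarith
    set M := sSup ((fun x => |φ x|) '' Ioc τ v₀) with hM
    have hne : ((fun x => |φ x|) '' Ioc τ v₀).Nonempty :=
      (Set.nonempty_Ioc.mpr hτv₀).image _
    have hMbdd : BddAbove ((fun x => |φ x|) '' Ioc τ v₀) := by
      refine ⟨C, ?_⟩
      rintro _ ⟨x, hx, rfl⟩
      exact hCb x (hτ0.trans hx.1.le) (hx.2.trans hv₀T)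
    have hM0 : 0 ≤ M :=
      (abs_nonneg _).trans (le_csSup hMbdd ⟨v₀, ⟨hτv₀, le_rfl⟩, rfl⟩)
    have hkey : ∀ x ∈ Ioc τ v₀, |φ x| ≤ M * (1/2) := by
      intro x hx
      have hx0 : 0 ≤ x := hτ0.trans hx.1.le
      have hxT : x ≤ T := hx.2.trans hv₀T
      have h1 := hbasic x hx0 hxT
      have hdisj : Disjoint (Icc 0 τ) (Ioo τ x) := by
        apply Set.disjoint_left.mpr
        rintro y ⟨_, hy1⟩ ⟨hy2, _⟩
        exact absurd hy1 (not_le.mpr hy2)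
      have hunion : Icc 0 τ ∪ Ioo τ x = Ico 0 x := Set.Icc_union_Ioo_eq_Ico hτ0 hx.1
      have habs1 : IntegrableOn (fun y => |φ y|) (Icc 0 τ) μ :=
        habs.mono_set (Icc_subset_Icc le_rfl hτT)
      have habs2 : IntegrableOn (fun y => |φ y|) (Ioo τ x) μ :=
        habs.mono_set (fun y hy => ⟨hτ0.trans hy.1.le, (hy.2.le.trans hxT)⟩)
      have hsplit2 : ∫ y in Ico 0 x, |φ y| ∂μ
          = (∫ y in Icc 0 τ, |φ y| ∂μ) + ∫ y in Ioo τ x, |φ y| ∂μ := by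
        rw [← hunion]
        exact setIntegral_union hdisj measurableSet_Ioo habs1 habs2
      have hzero1 : ∫ y in Icc 0 τ, |φ y| ∂μ = 0 := by
        rw [show (∫ y in Icc 0 τ, |φ y| ∂μ) = ∫ _ in Icc 0 τ, (0:ℝ) ∂μ from
          setIntegral_congr_fun measurableSet_Icc
            (fun y hy => by rw [hτS.2 y hy, abs_zero])]
        simp
      have hbound2 : ∫ y in Ioo τ x, |φ y| ∂μ ≤ M * (1/2) := by
        have hle : ∫ y in Ioo τ x, |φ y| ∂μ ≤ ∫ _ in Ioo τ x, M ∂μ := by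
          refine setIntegral_mono_on habs2
            ((integrableOn_const_iff (C := M)).mpr (Or.inr ?_)) measurableSet_Ioo (fun y hy => ?_)
          · rw [A.measure_Ioo]
            exact ENNReal.ofReal_lt_top
          · exact le_csSup hMbdd ⟨y, ⟨hy.1, hy.2.le.trans hx.2⟩, rfl⟩
        rw [setIntegral_const, measureReal_def, smul_eq_mul] at hle
        have hmeas : (μ (Ioo τ x)).toReal ≤ 1/2 := by
          rw [A.measure_Ioo]
          have hll : Function.leftLim A x - A τ ≤ 1/2 := by
            have h1 : Function.leftLim A x ≤ A v₀ := (A.mono.leftLim_le le_rfl).trans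
              (A.mono hx.2)
            linarith
          rcases le_or_gt (Function.leftLim A x - A τ) 0 with h | h
          · rw [ENNReal.ofReal_eq_zero.mpr h]
            norm_num
          · rw [ENNReal.toReal_ofReal h.le]
            exact hll
        calc ∫ y in Ioo τ x, |φ y| ∂μ ≤ (μ (Ioo τ x)).toReal * M := hle
          _ ≤ (1/2) * M := mul_le_mul_of_nonneg_right hmeas hM0
          _ = M * (1/2) := by ring
      rw [hsplit2, hzero1, zero_add] at h1
      exact h1.trans hbound2
    have hMle : M ≤ M * (1/2) := by
      apply csSup_le hne
      rintro _ ⟨x, hx, rfl⟩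
      exact hkey x hx
    have hMz : M = 0 := by linarith
    have hv₀S : v₀ ∈ S := by
      refine ⟨⟨hτ0.trans hτv₀.le, hv₀T⟩, fun s hs => ?_⟩
      rcases le_or_gt s τ with h | h
      · exact hτS.2 s ⟨hs.1, h⟩
      · have h2 : |φ s| ≤ M := le_csSup hMbdd ⟨s, ⟨h, hs.2⟩, rfl⟩
        rw [hMz] at h2
        exact abs_eq_zero.mp (le_antisymm h2 (abs_nonneg _))
    have := le_csSup hbdd hv₀S
    linarith
  · intro s h0 hsT
    exact hτS.2 s ⟨h0, hsT.trans_eq heqt.symm⟩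

lemma G_formula (a : ℝ) (G : ℝ → ℝ) (hΔnn : ∀ s, 0 ≤ Δ s)
    (hsum : ∀ t, Summable fun s : Icc (0:ℝ) t => Δ s)
    (hG : ∀ t, 0 ≤ t →
      G t = 1 - (1 - a) * Real.exp (-(Ac t - Ac 0)) * ∏' s : Icc (0:ℝ) t, (1 + Δ s)⁻¹) :
    ∀ t, 0 ≤ t → G t = 1 - (1 - a) * ee Ac Δ t := by
  intro t ht
  rw [hG t ht, tprod_eq_exp hΔnn hsum t, ee, cL, mul_assoc, ← Real.exp_add]
  congr 3
  ring

lemma part1 (A : StieltjesFunction ℝ) (a : ℝ) (G : ℝ → ℝ)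
    (hAcc : Continuous Ac) (hAcm : Monotone Ac)
    (hΔ : ∀ s, Δ s = A s - Function.leftLim A s) (hΔnn : ∀ s, 0 ≤ Δ s)
    (hsum : ∀ t, Summable fun s : Icc (0:ℝ) t => Δ s)
    (hdec : ∀ t, 0 ≤ t → A t = Ac t + ∑' s : Icc (0:ℝ) t, Δ s)
    (hG : ∀ t, 0 ≤ t →
      G t = 1 - (1 - a) * Real.exp (-(Ac t - Ac 0)) * ∏' s : Icc (0:ℝ) t, (1 + Δ s)⁻¹) :
    ∀ t, 0 ≤ t → G t = a + ∫ s in Icc 0 t, (1 - G s) ∂A.measure := by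
  intro t ht
  have hform := G_formula a G hΔnn hsum hG
  have h1 : EqOn (fun s => 1 - G s) (fun s => (1 - a) * ee Ac Δ s) (Icc 0 t) := by
    intro s hs
    simp only
    rw [hform s hs.1]
    ring
  rw [setIntegral_congr_fun measurableSet_Icc h1, integral_const_mul,
    key_integral A hAcc hAcm hΔ hΔnn hsum hdec ht, hform t ht]
  ring

lemma Gint (A : StieltjesFunction ℝ) (a : ℝ) (G : ℝ → ℝ)
    (hAcm : Monotone Ac) (hΔnn : ∀ s, 0 ≤ Δ s)
    (hsum : ∀ t, Summable fun s : Icc (0:ℝ) t => Δ s)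
    (hform : ∀ t, 0 ≤ t → G t = 1 - (1 - a) * ee Ac Δ t) :
    ∀ t, 0 ≤ t → IntegrableOn (fun s => 1 - G s) (Icc 0 t) A.measure := by
  intro t ht
  have h1 : IntegrableOn (fun s => (1 - a) * ee Ac Δ s) (Icc 0 t) A.measure :=
    (intOn_ee hΔnn hAcm hsum ht).const_mul (1 - a)
  refine h1.congr_fun (fun s hs => ?_) measurableSet_Icc
  rw [hform s hs.1]
  ring

lemma uniq (A : StieltjesFunction ℝ) (a : ℝ) (G H : ℝ → ℝ)
    (hGeq : ∀ t, 0 ≤ t → G t = a + ∫ s in Icc 0 t, (1 - G s) ∂A.measure)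
    (hGint : ∀ t, 0 ≤ t → IntegrableOn (fun s => 1 - G s) (Icc 0 t) A.measure)
    (hH : ∀ t, 0 ≤ t → H t = a + ∫ s in Icc 0 t, (1 - H s) ∂A.measure)
    {T : ℝ} (hT : 0 ≤ T)
    (hHint : IntegrableOn (fun s => 1 - H s) (Icc 0 T) A.measure) :
    ∀ s, 0 ≤ s → s ≤ T → H s = G s := by
  set μ := A.measure with hμdef
  set φ : ℝ → ℝ := fun s => H s - G s with hφ
  have hφint : IntegrableOn φ (Icc 0 T) μ := by
    have h1 : IntegrableOn (fun s => (1 - G s) - (1 - H s)) (Icc 0 T) μ :=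
      (hGint T hT).sub hHint
    refine IntegrableOn.congr_fun h1 (fun s _ => ?_) measurableSet_Icc
    simp only [hφ]
    ring
  have heqφ : ∀ s, 0 ≤ s → s ≤ T → φ s = -∫ x in Icc 0 s, φ x ∂μ := by
    intro s h0 hsT
    have e1 := hH s h0
    have e2 := hGeq s h0
    have i1 : IntegrableOn (fun x => 1 - H x) (Icc 0 s) μ :=
      hHint.mono_set (Icc_subset_Icc le_rfl hsT)
    have i2 : IntegrableOn (fun x => 1 - G x) (Icc 0 s) μ := hGint s h0
    have h4 : ∫ x in Icc 0 s, φ x ∂μ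
        = ∫ x in Icc 0 s, ((1 - G x) - (1 - H x)) ∂μ :=
      setIntegral_congr_fun measurableSet_Icc (fun x _ => by simp only [hφ]; ring)
    rw [h4, integral_sub i2 i1] at *
    simp only [hφ]
    linarith
  have hz := gronwall A hT hφint heqφ
  intro s h0 hsT
  have := hz s h0 hsT
  simp only [hφ] at this
  linarith

lemma allint (A : StieltjesFunction ℝ) (a : ℝ) (G H : ℝ → ℝ)
    (hAcm : Monotone Ac) (hΔnn : ∀ s, 0 ≤ Δ s)
    (hsum : ∀ t, Summable fun s : Icc (0:ℝ) t => Δ s)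
    (hGeq : ∀ t, 0 ≤ t → G t = a + ∫ s in Icc 0 t, (1 - G s) ∂A.measure)
    (hGint : ∀ t, 0 ≤ t → IntegrableOn (fun s => 1 - G s) (Icc 0 t) A.measure)
    (hH : ∀ t, 0 ≤ t → H t = a + ∫ s in Icc 0 t, (1 - H s) ∂A.measure) :
    ∀ t, 0 ≤ t → IntegrableOn (fun s => 1 - H s) (Icc 0 t) A.measure := by
  by_contra hcon
  push_neg at hcon
  obtain ⟨t₀, ht₀, hbad⟩ := hcon
  set Bad : Set ℝ :=
    {u | 0 ≤ u ∧ ¬ IntegrableOn (fun s => 1 - H s) (Icc 0 u) A.measure} with hBad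
  have hBne : Bad.Nonempty := ⟨t₀, ht₀, hbad⟩
  have hBbdd : BddBelow Bad := ⟨0, fun x hx => hx.1⟩
  set c := sInf Bad with hc
  have hc0 : 0 ≤ c := le_csInf hBne (fun x hx => hx.1)
  have hup : ∀ u, c < u → ¬ IntegrableOn (fun s => 1 - H s) (Icc 0 u) A.measure := by
    intro u hu hint
    obtain ⟨b, hbB, hb⟩ := exists_lt_of_csInf_lt hBne hu
    exact hbB.2 (hint.mono_set (Icc_subset_Icc le_rfl hb.le))
  have hHa : ∀ u, c < u → H u = a := by
    intro u hu
    rw [hH u (hc0.trans hu.le), integral_undef (hup u hu), add_zero]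
  have hgood : ∀ v, 0 ≤ v → v < c →
      IntegrableOn (fun s => 1 - H s) (Icc 0 v) A.measure := by
    intro v h0 hv
    by_contra hbadv
    exact absurd (csInf_le hBbdd ⟨h0, hbadv⟩) (not_le.mpr hv)
  have hHG : ∀ s, 0 ≤ s → s < c → H s = G s := fun s h0 hs =>
    uniq A a G H hGeq hGint hH h0 (hgood s h0 hs) s h0 le_rfl
  have hkey : IntegrableOn (fun s => 1 - H s) (Icc 0 (c+1)) A.measure := by
    have hsplit : Ico 0 c ∪ Icc c (c+1) = Icc 0 (c+1) :=
      Set.Ico_union_Icc_eq_Icc hc0 (by linarith)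
    rw [← hsplit]
    apply IntegrableOn.union
    · refine ((hGint c hc0).mono_set Ico_subset_Icc_self).congr_fun
        (fun x hx => ?_) measurableSet_Ico
      rw [hHG x hx.1 hx.2]
    · have hmeasg : Measurable (fun x : ℝ => if x = c then 1 - H c else 1 - a) :=
        Measurable.ite (MeasurableSet.singleton c) measurable_const measurable_const
      have hbdd : ∀ᵐ x ∂(A.measure.restrict (Icc c (c+1))),
          ‖if x = c then 1 - H c else 1 - a‖ ≤ max |1 - H c| |1 - a| := by
        refine Filter.Eventually.of_forall (fun x => ?_)
        by_cases hx : x = c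
        · simp only [hx, if_pos rfl, Real.norm_eq_abs]
          exact le_max_left _ _
        · simp only [if_neg hx, Real.norm_eq_abs]
          exact le_max_right _ _
      have h5 : IntegrableOn (fun x : ℝ => if x = c then 1 - H c else 1 - a)
          (Icc c (c+1)) A.measure :=
        Measure.integrableOn_of_bounded (meas_Icc_ne_top A c (c+1))
          hmeasg.aestronglyMeasurable hbdd
      refine h5.congr_fun (fun x hx => ?_) measurableSet_Icc
      by_cases hxc : x = c
      · dsimp only; rw [if_pos hxc, hxc]
      · dsimp only; rw [if_neg hxc, hHa x (lt_of_le_of_ne hx.1 (Ne.symm hxc))]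
  exact hup (c+1) (by linarith) hkey
end DG

/-- The explicit exponential/product formula solves the measure differential equation
`dG = (1 - G) dA` with initial condition `G_{0-} = a`, and any solution of this equation is
monotone towards, and never crosses, `1`. -/
theorem solves_dG_eq_one_sub_G_dA (A : StieltjesFunction ℝ) (a : ℝ)
    (Ac : ℝ → ℝ) (hAcc : Continuous Ac) (hAcm : Monotone Ac)
    (Δ : ℝ → ℝ) (hΔ : ∀ s, Δ s = A s - Function.leftLim A s)
    (hΔnn : ∀ s, 0 ≤ Δ s)
    (hsum : ∀ t, Summable fun s : Icc (0:ℝ) t => Δ s)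
    (hdec : ∀ t, 0 ≤ t → A t = Ac t + ∑' s : Icc (0:ℝ) t, Δ s)
    (G : ℝ → ℝ)
    (hG : ∀ t, 0 ≤ t →
      G t = 1 - (1 - a) * Real.exp (-(Ac t - Ac 0)) * ∏' s : Icc (0:ℝ) t, (1 + Δ s)⁻¹) :
    (∀ t, 0 ≤ t → G t = a + ∫ s in Icc 0 t, (1 - G s) ∂A.measure) ∧
    (∀ H : ℝ → ℝ,
      (∀ t, 0 ≤ t → H t = a + ∫ s in Icc 0 t, (1 - H s) ∂A.measure) →
      ((a ≤ 1 → MonotoneOn H (Ici 0) ∧ ∀ t, 0 ≤ t → H t ≤ 1) ∧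
       (1 ≤ a → AntitoneOn H (Ici 0) ∧ ∀ t, 0 ≤ t → 1 ≤ H t))) := by
  have hform := DG.G_formula a G hΔnn hsum hG
  have hpart1 := DG.part1 A a G hAcc hAcm hΔ hΔnn hsum hdec hG
  refine ⟨hpart1, ?_⟩
  intro H hH
  have hGint := DG.Gint A a G hAcm hΔnn hsum hform
  have hallint := DG.allint A a G H hAcm hΔnn hsum hpart1 hGint hH
  have hHG : ∀ s, 0 ≤ s → H s = G s := fun s hs =>
    DG.uniq A a G H hpart1 hGint hH hs (hallint s hs) s hs le_rfl
  have hee_anti := DG.ee_antitone hΔnn hAcm hsum (Ac := Ac)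
  have hee_pos := DG.ee_pos (Ac := Ac) (Δ := Δ)
  constructor
  · intro ha
    constructor
    · intro x hx y hy hxy
      have hx' : (0:ℝ) ≤ x := hx
      have hy' : (0:ℝ) ≤ y := hy
      rw [hHG x hx', hHG y hy', hform x hx', hform y hy']
      have h1 := hee_anti hxy
      have h2 : 0 ≤ (1 - a) * (DG.ee Ac Δ x - DG.ee Ac Δ y) :=
        mul_nonneg (by linarith) (by linarith)
      linarith
    · intro t ht
      rw [hHG t ht, hform t ht]
      have h2 : 0 ≤ (1 - a) * DG.ee Ac Δ t :=
        mul_nonneg (by linarith) (hee_pos t).le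
      linarith
  · intro ha
    constructor
    · intro x hx y hy hxy
      have hx' : (0:ℝ) ≤ x := hx
      have hy' : (0:ℝ) ≤ y := hy
      rw [hHG x hx', hHG y hy', hform x hx', hform y hy']
      have h1 := hee_anti hxy
      have h2 : 0 ≤ (a - 1) * (DG.ee Ac Δ x - DG.ee Ac Δ y) :=
        mul_nonneg (by linarith) (by linarith)
      linarith
    · intro t ht
      rw [hHG t ht, hform t ht]
      have h2 : 0 ≤ (a - 1) * DG.ee Ac Δ t :=
        mul_nonneg (by linarith) (hee_pos t).le
      linarith
end

section
/- Suppose L > F ≥ M at some time t (real numbers with L_t > F_t ≥ M_t). If both players use the extended stopping intensity α = (L_t − F_t)/(L_t − M_t) ∈ (0,1], then the resulting expected payoff μ_L(α,α)·L_t + μ_L(α,α)·F_t + μ_M(α,α)·M_t equals F_t for each player. -/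
/-- Leader probability in the repeated stopping game. -/
noncomputable def muL (x y : ℝ) : ℝ := x * (1 - y) / (x + y - x * y)

/-- Simultaneous-stopping probability in the repeated stopping game. -/
noncomputable def muM (x y : ℝ) : ℝ := x * y / (x + y - x * y)

/-- If `L > F ≥ M` and both players use the extended stopping intensity
`α = (L - F)/(L - M)`, then `α ∈ (0,1]` and each player's expected payoff
`μ_L(α,α)·L + μ_L(α,α)·F + μ_M(α,α)·M` equals `F`. -/
theorem preemption_indifference (Lt Ft Mt : ℝ) (hLF : Ft < Lt) (hFM : Mt ≤ Ft)
    (α : ℝ) (hα : α = (Lt - Ft) / (Lt - Mt)) :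
    α ∈ Set.Ioc (0:ℝ) 1 ∧
    muL α α * Lt + muL α α * Ft + muM α α * Mt = Ft := by
  have hLM : (0:ℝ) < Lt - Mt := by linarith
  have hα0 : 0 < α := by
    rw [hα]; exact div_pos (by linarith) hLM
  have hα1 : α ≤ 1 := by
    rw [hα, div_le_one hLM]; linarith
  have hkey : α * (Lt - Mt) = Lt - Ft := by
    rw [hα]; field_simp
  have hden : α + α - α * α ≠ 0 := by nlinarith
  refine ⟨⟨hα0, hα1⟩, ?_⟩
  unfold muL muM
  field_simp
  rw [div_eq_iff (by linarith)]
  nlinarith [hkey, sq_nonneg α]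
end

section
/- Let r > max(μ,0), c > 0, m ≥ 1, β₂ < 0 the negative root of (1/2)σ²β(β−1) + μβ − r = 0, and y_m = (β₂/(β₂−1))((r−μ)/r)(c/m). Define v(y) = m y/(r−μ) − c/r − (y/y_m)^{β₂}(m y_m/(r−μ) − c/r) for y > y_m and v(y) = 0 for y ≤ y_m. Then v is continuous on (0,∞), v ≥ 0, and v satisfies the ODE (1/2)σ²y²v'' + μyv' − rv + (my − c) = 0 on (y_m, ∞) with value matching v(y_m) = 0 and smooth pasting v'(y_m) = 0. -/
/-- The value function of the monopolist's optimal exit problem: it is continuous on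
`(0,∞)`, nonnegative, satisfies the ODE
`(1/2)σ²y²v'' + μyv' - rv + (my - c) = 0` on `(y_m, ∞)`, with value matching
`v(y_m) = 0` and smooth pasting `v'(y_m) = 0`. -/
theorem value_function_properties (r μ σ c m β₂ : ℝ) (hr : r > max μ 0) (hσ : 0 < σ)
    (hc : 0 < c) (hm : 1 ≤ m) (hβ : β₂ < 0)
    (hroot : σ ^ 2 / 2 * (β₂ * (β₂ - 1)) + μ * β₂ - r = 0)
    (ym : ℝ) (hym : ym = β₂ / (β₂ - 1) * ((r - μ) / r) * (c / m))
    (v : ℝ → ℝ)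
    (hv : ∀ y : ℝ, v y = if ym < y then
        m * y / (r - μ) - c / r - (y / ym) ^ β₂ * (m * ym / (r - μ) - c / r) else 0) :
    ContinuousOn v (Set.Ioi 0) ∧
    (∀ y ∈ Set.Ioi (0:ℝ), 0 ≤ v y) ∧
    (∀ y ∈ Set.Ioi ym,
      σ ^ 2 / 2 * y ^ 2 * deriv (deriv v) y + μ * y * deriv v y - r * v y + (m * y - c) = 0) ∧
    v ym = 0 ∧ deriv v ym = 0 := by
  have hμr : μ < r := (le_max_left μ 0).trans_lt hr
  have hr0 : 0 < r := (le_max_right μ 0).trans_lt hr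
  have hrμ : 0 < r - μ := sub_pos.2 hμr
  have hm0 : 0 < m := lt_of_lt_of_le one_pos hm
  have hβ1 : β₂ - 1 < 0 := by linarith
  have hym0 : 0 < ym := by
    rw [hym]
    have h1 : 0 < β₂ / (β₂ - 1) := div_pos_iff.2 (Or.inr ⟨hβ, hβ1⟩)
    have h2 : 0 < (r - μ) / r := div_pos hrμ hr0
    have h3 : 0 < c / m := div_pos hc hm0
    positivity
  have hne1 : r ≠ 0 := hr0.ne'
  have hne2 : (β₂ - 1) ≠ 0 := hβ1.ne
  have hne3 : m ≠ 0 := hm0.ne'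
  have hne4 : (r - μ) ≠ 0 := hrμ.ne'
  set A := m * ym / (r - μ) - c / r with hAdef
  have hA : A = c / (r * (β₂ - 1)) := by
    rw [hAdef, hym]; field_simp; ring
  have hA0 : A < 0 := by
    rw [hA]; exact div_neg_of_pos_of_neg hc (mul_neg_of_pos_of_neg hr0 hβ1)
  have hKA : β₂ * A / ym = m / (r - μ) := by
    have h : β₂ * A = m / (r - μ) * ym := by
      rw [hA, hym]; field_simp
    rw [h, mul_div_assoc, div_self hym0.ne', mul_one]
  set g : ℝ → ℝ := fun y => m * y / (r - μ) - c / r - (y / ym) ^ β₂ * A with hgdef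
  set g1 : ℝ → ℝ := fun y => m / (r - μ) - 1 / ym * β₂ * (y / ym) ^ (β₂ - 1) * A with hg1def
  set g2 : ℝ → ℝ :=
    fun y => -(1 / ym * β₂ * (1 / ym * (β₂ - 1) * (y / ym) ^ (β₂ - 2))) * A with hg2def
  have hveq : ∀ y, ym < y → v y = g y := by
    intro y hy; rw [hv]; simp only [if_pos hy, hgdef]
  have hveq0 : ∀ y, y ≤ ym → v y = 0 := by
    intro y hy; rw [hv]; simp only [if_neg (not_lt.2 hy)]
  have hg' : ∀ y, 0 < y → HasDerivAt g (g1 y) y := by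
    intro y hy
    have h1 : HasDerivAt (fun z : ℝ => z / ym) (1 / ym) y := by
      simpa using (hasDerivAt_id y).div_const ym
    have h2 : HasDerivAt (fun z : ℝ => (z / ym) ^ β₂)
        (1 / ym * β₂ * (y / ym) ^ (β₂ - 1)) y :=
      h1.rpow_const (Or.inl (div_pos hy hym0).ne')
    have h3 : HasDerivAt (fun z : ℝ => m * z / (r - μ)) (m / (r - μ)) y := by
      simpa using (((hasDerivAt_id y).const_mul m).div_const (r - μ))
    have := (h3.sub_const (c / r)).sub (h2.mul_const A)
    exact this
  have hg1' : ∀ y, 0 < y → HasDerivAt g1 (g2 y) y := by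
    intro y hy
    have h1 : HasDerivAt (fun z : ℝ => z / ym) (1 / ym) y := by
      simpa using (hasDerivAt_id y).div_const ym
    have h2 : HasDerivAt (fun z : ℝ => (z / ym) ^ (β₂ - 1))
        (1 / ym * (β₂ - 1) * (y / ym) ^ (β₂ - 1 - 1)) y :=
      h1.rpow_const (Or.inl (div_pos hy hym0).ne')
    have h2' : HasDerivAt (fun z : ℝ => (z / ym) ^ (β₂ - 1))
        (1 / ym * (β₂ - 1) * (y / ym) ^ (β₂ - 2)) y := by
      convert h2 using 2; ring
    have := (hasDerivAt_const y (m / (r - μ))).sub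
      (((h2'.const_mul (1 / ym * β₂))).mul_const A)
    refine this.congr_deriv ?_
    simp only [hg2def]
    ring
  -- value matching at ym for g
  have hgym : g ym = 0 := by
    simp only [hgdef, div_self hym0.ne', Real.one_rpow]
    rw [hAdef]; ring
  have hKA' : 1 / ym * β₂ * A = m / (r - μ) := by
    rw [← hKA]; ring
  have hg1ym : g1 ym = 0 := by
    simp only [hg1def, div_self hym0.ne', Real.one_rpow]
    linear_combination -hKA'
  -- derivative of v at ym
  have hdym : HasDerivAt v 0 ym := by
    have hG0 : HasDerivAt g 0 ym := by
      have h := hg' ym hym0; rwa [hg1ym] at h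
    have hIci : HasDerivWithinAt v 0 (Set.Ici ym) ym := by
      refine (hG0.hasDerivWithinAt).congr (fun z hz => ?_) ?_
      · rcases eq_or_lt_of_le (Set.mem_Ici.1 hz) with h | h
        · rw [← h, hveq0 ym le_rfl, hgym]
        · exact hveq z h
      · rw [hveq0 ym le_rfl, hgym]
    have hIic : HasDerivWithinAt v 0 (Set.Iic ym) ym := by
      refine ((hasDerivWithinAt_const ym _ (0:ℝ)).congr (fun z hz => ?_) ?_)
      · exact hveq0 z hz
      · exact hveq0 ym le_rfl
    have := hIic.union hIci
    rw [Set.Iic_union_Ici] at this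
    exact this.hasDerivAt (Filter.univ_mem)
  -- eventual equalities
  have hvg : ∀ y, ym < y → v =ᶠ[nhds y] g := by
    intro y hy
    filter_upwards [Ioi_mem_nhds hy] with z hz using hveq z hz
  have hderv : ∀ y, ym < y → deriv v y = g1 y := by
    intro y hy
    rw [(hvg y hy).deriv_eq, (hg' y (hym0.trans hy)).deriv]
  -- nonnegativity of g on [ym, ∞)
  have hgmono : MonotoneOn g (Set.Ici ym) := by
    apply monotoneOn_of_deriv_nonneg (convex_Ici ym)
    · intro z hz
      exact ((hg' z (lt_of_lt_of_le hym0 hz)).continuousAt).continuousWithinAt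
    · intro z hz
      rw [interior_Ici] at hz
      exact ((hg' z (hym0.trans hz)).differentiableAt).differentiableWithinAt
    · intro z hz
      rw [interior_Ici] at hz
      rw [(hg' z (hym0.trans hz)).deriv]
      have hpow : (z / ym) ^ (β₂ - 1) ≤ 1 :=
        Real.rpow_le_one_of_one_le_of_nonpos ((one_le_div hym0).2 hz.le) hβ1.le
      have hK : 0 < m / (r - μ) := div_pos hm0 hrμ
      have : g1 z = m / (r - μ) * (1 - (z / ym) ^ (β₂ - 1)) := by
        simp only [hg1def]
        rw [show 1 / ym * β₂ * (z / ym) ^ (β₂ - 1) * A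
            = 1 / ym * β₂ * A * (z / ym) ^ (β₂ - 1) from by ring, hKA']
        ring
      rw [this]
      exact mul_nonneg hK.le (by linarith)
  refine ⟨?_, ?_, ?_, hveq0 ym le_rfl, hdym.deriv⟩
  · -- continuity
    intro y hy
    apply ContinuousAt.continuousWithinAt
    rcases lt_trichotomy y ym with h | h | h
    · have hev : v =ᶠ[nhds y] (fun _ => (0:ℝ)) := by
        filter_upwards [Iio_mem_nhds h] with z hz using hveq0 z hz.le
      exact (continuousAt_const).congr hev.symm
    · subst h; exact hdym.continuousAt
    · exact ((hg' y (hym0.trans h)).continuousAt).congr (hvg y h).symm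
  · -- nonnegativity
    intro y hy
    rcases le_or_gt y ym with h | h
    · rw [hveq0 y h]
    · rw [hveq y h]
      have := hgmono (Set.self_mem_Ici) (Set.mem_Ici.2 h.le) h.le
      rwa [hgym] at this
  · -- ODE
    intro y hy
    have hy' : ym < y := hy
    have hy0 : 0 < y := hym0.trans hy'
    have hdd : deriv (deriv v) y = g2 y := by
      have hev : deriv v =ᶠ[nhds y] g1 := by
        filter_upwards [Ioi_mem_nhds hy'] with z hz using hderv z hz
      rw [hev.deriv_eq, (hg1' y hy0).deriv]
    rw [hdd, hderv y hy', hveq y hy']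
    have hu : 0 < y / ym := div_pos hy0 hym0
    have hyne : y ≠ 0 := hy0.ne'
    have hymne : ym ≠ 0 := hym0.ne'
    have hp1 : (y / ym) ^ (β₂ - 1) = (y / ym) ^ β₂ * ym / y := by
      rw [Real.rpow_sub hu, Real.rpow_one]; field_simp
    have hp2 : (y / ym) ^ (β₂ - 2) = (y / ym) ^ β₂ * ym ^ 2 / y ^ 2 := by
      rw [Real.rpow_sub hu, Real.rpow_two]; field_simp
    have e2 : σ ^ 2 / 2 * y ^ 2 * g2 y
        = -(σ ^ 2 / 2 * (β₂ * (β₂ - 1))) * ((y / ym) ^ β₂ * A) := by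
      simp only [hg2def, hp2]
      field_simp
    have e1 : μ * y * g1 y = μ * y * (m / (r - μ)) - μ * β₂ * ((y / ym) ^ β₂ * A) := by
      simp only [hg1def, hp1]
      field_simp
    have e0 : r * g y = r * y * (m / (r - μ)) - c - r * ((y / ym) ^ β₂ * A) := by
      simp only [hgdef]
      field_simp
    have key : μ * (m / (r - μ)) - r * (m / (r - μ)) + m = 0 := by
      field_simp; ring
    rw [e2, e1, e0]
    linear_combination (-((y / ym) ^ β₂ * A)) * hroot + y * key
end

section
/- Let L be a measurable real-valued process such that K := sup{E[|L_τ| 1_{τ<∞}] : τ a stopping time} < ∞, and let G be an a.s. right-continuous nondecreasing adapted process with 0 ≤ G ≤ 1. Then for any random times 0 ≤ a ≤ b ≤ ∞, E[∫_{[a,b)} |L_t| dG_t] ≤ K, and the pathwise integral ∫_{[a,b)} |L_t| dG_t is a.s. finite, where the integral is computed by the change of variable ∫_{[a,b)} |L_t| dG_t = ∫_0^1 |L_{τ^G(x)}| 1_{τ^G(x) ∈ [a,b)} dx with τ^G(x) = inf{t : G_t ≥ x}. -/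
open MeasureTheory Set
open scoped NNReal ENNReal Topology

/-- A stopping time possibly taking the value `+∞`, for a filtration indexed by `ℝ≥0`. -/
def IsStoppingTimeE {Ω : Type*} {m : MeasurableSpace Ω} (ℱ : Filtration ℝ≥0 m)
    (τ : Ω → ℝ≥0∞) : Prop :=
  ∀ u : ℝ≥0, MeasurableSet[ℱ u] {ω | τ ω ≤ (u : ℝ≥0∞)}

/-- The pathwise left-continuous inverse `τ^G(x)(ω) = inf{t ≥ 0 : G_t(ω) ≥ x}`. -/
noncomputable def tauG {Ω : Type*} (G : ℝ≥0 → Ω → ℝ) (ω : Ω) (x : ℝ) : ℝ≥0∞ :=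
  ⨅ t : {t : ℝ≥0 // x ≤ G t ω}, ((t.1 : ℝ≥0∞))

theorem tauG_le_iff {Ω : Type*} (G : ℝ≥0 → Ω → ℝ)
    (hGmono : ∀ ω, Monotone fun t => G t ω)
    (hGrc : ∀ ω (t : ℝ≥0), ContinuousWithinAt (fun s => G s ω) (Ici t) t)
    (ω : Ω) (x : ℝ) (u : ℝ≥0) :
    tauG G ω x ≤ (u : ℝ≥0∞) ↔ x ≤ G u ω := by
  constructor
  · intro h
    -- for every s > u, x ≤ G s ω
    have key : ∀ s : ℝ≥0, u < s → x ≤ G s ω := by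
      intro s hs
      have hlt : tauG G ω x < (s : ℝ≥0∞) :=
        lt_of_le_of_lt h (by exact_mod_cast hs)
      obtain ⟨⟨t, ht⟩, htlt⟩ := iInf_lt_iff.mp hlt
      have : t ≤ s := le_of_lt (by exact_mod_cast htlt)
      exact ht.trans (hGmono ω this)
    -- right continuity
    have hne : (𝓝[>] u).NeBot := nhdsGT_neBot u
    have htend : Filter.Tendsto (fun s => G s ω) (𝓝[>] u) (𝓝 (G u ω)) :=
      (hGrc ω u).mono_left (nhdsWithin_mono _ Ioi_subset_Ici_self)
    exact ge_of_tendsto htend (Filter.eventually_of_mem self_mem_nhdsWithin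
      fun s hs => key s hs)
  · intro h
    exact iInf_le_of_le ⟨u, h⟩ le_rfl

/-- If `K` bounds `E[|L_τ| 1_{τ<∞}]` over all stopping times and `G` is a right-continuous
nondecreasing adapted process with values in `[0,1]`, then for random times `a ≤ b`, the
pathwise integral `∫_{[a,b)} |L_t| dG_t`, computed by the change of variable
`∫_0^1 |L_{τ^G(x)}| 1_{τ^G(x) ∈ [a,b)} dx`, has expectation at most `K` and is a.s. finite. -/
theorem integral_L_dG_bounded {Ω : Type*} {m : MeasurableSpace Ω}
    (ℱ : Filtration ℝ≥0 m) (P : Measure Ω) [IsProbabilityMeasure P]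
    (L : ℝ≥0 → Ω → ℝ) (hL : Measurable (Function.uncurry L))
    (K : ℝ)
    (hK : ∀ τ : Ω → ℝ≥0∞, IsStoppingTimeE ℱ τ →
      ∫⁻ ω, Set.indicator {ω | τ ω < ⊤}
        (fun ω => ENNReal.ofReal |L (τ ω).toNNReal ω|) ω ∂P ≤ ENNReal.ofReal K)
    (G : ℝ≥0 → Ω → ℝ) (hGadapted : Adapted ℱ fun t => G t)
    (hGmono : ∀ ω, Monotone fun t => G t ω)
    (hGrc : ∀ ω (t : ℝ≥0), ContinuousWithinAt (fun s => G s ω) (Ici t) t)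
    (hG01 : ∀ (t : ℝ≥0) ω, G t ω ∈ Icc (0:ℝ) 1)
    (a b : Ω → ℝ≥0∞) (hab : ∀ ω, a ω ≤ b ω)
    (I : Ω → ℝ≥0∞)
    (hI : ∀ ω, I ω = ∫⁻ x in Ioc (0:ℝ) 1,
      Set.indicator {x | a ω ≤ tauG G ω x ∧ tauG G ω x < b ω ∧ tauG G ω x < ⊤}
        (fun x => ENNReal.ofReal |L (tauG G ω x).toNNReal ω|) x) :
    (∫⁻ ω, I ω ∂P ≤ ENNReal.ofReal K) ∧ ∀ᵐ ω ∂P, I ω < ⊤ := by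
  classical
  set μ : Measure ℝ := volume.restrict (Ioc (0:ℝ) 1) with hμ
  set J : Ω → ℝ≥0∞ := fun ω => ∫⁻ x, Set.indicator {x | tauG G ω x < ⊤}
      (fun x => ENNReal.ofReal |L (tauG G ω x).toNNReal ω|) x ∂μ with hJ
  -- pointwise I ≤ J
  have hIJ : ∀ ω, I ω ≤ J ω := by
    intro ω
    rw [hI ω]
    refine lintegral_mono fun x => ?_
    exact Set.indicator_le_indicator_of_subset
      (fun y hy => hy.2.2) (fun y => zero_le) x
  -- measurability of tauG on the product
  have htau_meas : Measurable (fun p : Ω × ℝ => tauG G p.1 p.2) := by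
    apply measurable_of_Iic
    intro u
    induction u using ENNReal.recTopCoe with
    | top => simp
    | coe u =>
      have : (fun p : Ω × ℝ => tauG G p.1 p.2) ⁻¹' Iic (u : ℝ≥0∞)
          = {p : Ω × ℝ | p.2 ≤ G u p.1} := by
        ext p
        simp only [mem_preimage, mem_Iic, mem_setOf_eq,
          tauG_le_iff G hGmono hGrc]
      rw [this]
      exact measurableSet_le measurable_snd
        (((hGadapted u).mono (ℱ.le u) le_rfl).comp measurable_fst)
  have hFmeas : Measurable (fun p : Ω × ℝ =>
      Set.indicator {p : Ω × ℝ | tauG G p.1 p.2 < ⊤}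
        (fun p => ENNReal.ofReal |L (tauG G p.1 p.2).toNNReal p.1|) p) := by
    apply Measurable.indicator
    · apply ENNReal.measurable_ofReal.comp
      apply (_root_.continuous_abs).measurable.comp
      exact hL.comp ((ENNReal.measurable_toNNReal.comp htau_meas).prodMk
        measurable_fst)
    · exact htau_meas measurableSet_Iio
  -- J in product form
  have hJeq : J = fun ω => ∫⁻ x, (fun p : Ω × ℝ =>
      Set.indicator {p : Ω × ℝ | tauG G p.1 p.2 < ⊤}
        (fun p => ENNReal.ofReal |L (tauG G p.1 p.2).toNNReal p.1|) p) (ω, x) ∂μ := by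
    funext ω
    rfl
  have hJmeas : Measurable J := by
    rw [hJeq]
    exact hFmeas.lintegral_prod_right'
  -- stopping time property
  have hstop : ∀ x : ℝ, IsStoppingTimeE ℱ (fun ω => tauG G ω x) := by
    intro x u
    have : {ω | tauG G ω x ≤ (u : ℝ≥0∞)} = (fun ω => G u ω) ⁻¹' Ici x := by
      ext ω
      simp [tauG_le_iff G hGmono hGrc]
    rw [this]
    exact (hGadapted u) measurableSet_Ici
  -- the bound for J via Tonelli
  have hJbound : ∫⁻ ω, J ω ∂P ≤ ENNReal.ofReal K := by
    rw [hJeq]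
    rw [lintegral_lintegral_swap hFmeas.aemeasurable]
    have hpt : ∀ x : ℝ, (∫⁻ ω, (fun p : Ω × ℝ =>
      Set.indicator {p : Ω × ℝ | tauG G p.1 p.2 < ⊤}
        (fun p => ENNReal.ofReal |L (tauG G p.1 p.2).toNNReal p.1|) p) (ω, x) ∂P)
        ≤ ENNReal.ofReal K := by
      intro x
      have := hK (fun ω => tauG G ω x) (hstop x)
      exact le_trans (le_of_eq rfl) this
    calc ∫⁻ x, (∫⁻ ω, (fun p : Ω × ℝ =>
      Set.indicator {p : Ω × ℝ | tauG G p.1 p.2 < ⊤}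
        (fun p => ENNReal.ofReal |L (tauG G p.1 p.2).toNNReal p.1|) p) (ω, x) ∂P) ∂μ
        ≤ ∫⁻ _, ENNReal.ofReal K ∂μ := lintegral_mono hpt
      _ = ENNReal.ofReal K := by
          rw [lintegral_const, hμ, Measure.restrict_apply_univ, Real.volume_Ioc]
          norm_num
  constructor
  · exact le_trans (lintegral_mono hIJ) hJbound
  · have hJfin : ∀ᵐ ω ∂P, J ω < ⊤ :=
      ae_lt_top hJmeas (lt_of_le_of_lt hJbound ENNReal.ofReal_lt_top).ne
    filter_upwards [hJfin] with ω hω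
    exact lt_of_le_of_lt (hIJ ω) hω
end

section
/- In the deterministic two-player timing game with continuous payoff functions L, F, M : ℝ≥0 → ℝ satisfying F ≥ L ≥ M, suppose the follower payoff F is nonincreasing (deterministic supermartingale). Let τ_L = inf{t ≥ ϑ : U_L(t) = L(t)} where U_L(t) = sup_{s ≥ t} L(s) is the deterministic Snell envelope of L. Then for any nondecreasing right-continuous G_j : ℝ≥0 → [0,1] (opponent distribution) and any time t_i ∈ [ϑ, τ_L), the payoff from stopping at τ_L (weakly) exceeds the payoff from stopping at t_i: ∫_{[t_i, τ_L]} F dG_j + (1−G_j(τ_L)) L(τ_L) ≥ ΔG_j(t_i) M(t_i) + (1−G_j(t_i)) L(t_i). -/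
open MeasureTheory Set

/-- Deterministic specialization of the dominance lemma: with continuous payoffs
`F ≥ L ≥ M`, `F` nonincreasing, and `τ_L` the first time after `ϑ` where the deterministic
Snell envelope `U_L(t) = sup_{s ≥ t} L(s)` meets `L`, stopping at `τ_L` (weakly) dominates
stopping at any earlier `t_i ∈ [ϑ, τ_L)` against any opponent distribution `G_j`. -/
theorem stop_at_tauL_dominates (L F M : ℝ → ℝ)
    (hLc : Continuous L) (hFc : Continuous F) (hMc : Continuous M)
    (hFL : ∀ t, L t ≤ F t) (hLM : ∀ t, M t ≤ L t)
    (hFanti : Antitone F)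
    (hLbdd : BddAbove (Set.range L))
    (ϑ : ℝ) (hϑ : 0 ≤ ϑ)
    (τL : ℝ) (hτL1 : ϑ ≤ τL)
    (hτL2 : sSup (L '' Ici τL) = L τL)
    (hτL3 : ∀ t, ϑ ≤ t → sSup (L '' Ici t) = L t → τL ≤ t)
    (Gj : StieltjesFunction ℝ) (hGj01 : ∀ t : ℝ, Gj t ∈ Icc (0:ℝ) 1) :
    ∀ ti, ϑ ≤ ti → ti < τL →
      (Gj ti - Function.leftLim Gj ti) * M ti + (1 - Gj ti) * L ti ≤
      (∫ s in Icc ti τL, F s ∂Gj.measure) + (1 - Gj τL) * L τL := by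
  intro ti hti htilt
  have hti' : ti ≤ τL := le_of_lt htilt
  -- maximum of L on [ti, τL]
  obtain ⟨t', ht'mem, ht'max⟩ :=
    IsCompact.exists_isMaxOn isCompact_Icc (nonempty_Icc.2 hti') (hLc.continuousOn)
  -- key claim: sSup (L '' Ici t') = L t'
  have hbdd : ∀ t : ℝ, BddAbove (L '' Ici t) := fun t =>
    hLbdd.mono (image_subset_range L (Ici t))
  have hLτ : ∀ s, τL ≤ s → L s ≤ L τL := by
    intro s hs
    rw [← hτL2]
    exact le_csSup (hbdd τL) ⟨s, hs, rfl⟩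
  have hsup : sSup (L '' Ici t') = L t' := by
    apply le_antisymm
    · apply csSup_le ((nonempty_Ici).image L)
      rintro y ⟨s, hs, rfl⟩
      rcases le_total s τL with h | h
      · exact ht'max ⟨le_trans ht'mem.1 hs, h⟩
      · exact le_trans (hLτ s h) (ht'max ⟨hti', le_refl _⟩)
    · exact le_csSup (hbdd t') ⟨t', self_mem_Ici, rfl⟩
  have ht'eq : t' = τL :=
    le_antisymm ht'mem.2 (hτL3 t' (le_trans hti ht'mem.1) hsup)
  have hLti : L ti ≤ L τL := by
    rw [← ht'eq]; exact ht'max ⟨le_refl _, hti'⟩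
  -- facts about Gj
  have hll_le : Function.leftLim Gj ti ≤ Gj ti := Gj.mono.leftLim_le (le_refl ti)
  have hGmono : Gj ti ≤ Gj τL := Gj.mono hti'
  have hll_le' : Function.leftLim Gj ti ≤ Gj τL := le_trans hll_le hGmono
  have h0ti := (hGj01 ti).1
  have h1τ := (hGj01 τL).2
  have h1ti := (hGj01 ti).2
  -- measure of the interval
  have hμIcc : Gj.measure (Icc ti τL) = ENNReal.ofReal (Gj τL - Function.leftLim Gj ti) :=
    Gj.measure_Icc ti τL
  have hμfin : Gj.measure (Icc ti τL) < ⊤ := by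
    rw [hμIcc]; exact ENNReal.ofReal_lt_top
  -- integral bound
  have hFint : IntegrableOn F (Icc ti τL) Gj.measure :=
    (hFc.continuousOn).integrableOn_compact isCompact_Icc
  have hint : L τL * (Gj τL - Function.leftLim Gj ti) ≤ ∫ s in Icc ti τL, F s ∂Gj.measure := by
    have hconst : ∫ (_ : ℝ) in Icc ti τL, L τL ∂Gj.measure
        = (Gj.measure (Icc ti τL)).toReal • L τL := setIntegral_const _
    have hmono : ∫ (_ : ℝ) in Icc ti τL, L τL ∂Gj.measure
        ≤ ∫ s in Icc ti τL, F s ∂Gj.measure := by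
      apply setIntegral_mono_on (integrableOn_const hμfin.ne) hFint
        measurableSet_Icc
      intro s hs
      exact le_trans (hFL τL) (hFanti hs.2)
    calc L τL * (Gj τL - Function.leftLim Gj ti)
        = (Gj.measure (Icc ti τL)).toReal • L τL := by
          rw [hμIcc, ENNReal.toReal_ofReal (by linarith)]
          simp [mul_comm]
      _ = ∫ (_ : ℝ) in Icc ti τL, L τL ∂Gj.measure := hconst.symm
      _ ≤ _ := hmono
  have hΔ : 0 ≤ Gj ti - Function.leftLim Gj ti := by linarith
  have hMti := hLM ti
  nlinarith [mul_le_mul_of_nonneg_left hMti hΔ,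
    mul_le_mul_of_nonneg_left hLti (by linarith : (0:ℝ) ≤ 1 - Function.leftLim Gj ti),
    mul_le_mul_of_nonneg_left hLti (by linarith : (0:ℝ) ≤ 1 - Gj ti)]
end
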